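/- arXiv:1305.0470 — 5 statements merged into one kernel-verified Lean document; each statement's English description precedes it below -/
import Mathlib

section
/- Let n ≥ 3 and let u be a choreography in X⁽ⁿ⁾ with symmetry group G ≤ Γ × Ŝ¹ (the stabilizer of u). Then ker τ ∩ ker ρ and ker τ ∩ ker σ are trivial. Concretely: if (I, σ, 0) ∈ G for some σ ∈ Sₙ, then σ = e; and if (A, e, 0) ∈ G for some A ∈ O(2), then A = I. -/
noncomputable section

open Complex

/-- The time circle `𝕋 = ℝ/ℤ`. -/
abbrev TimeCircle : Type := AddCircle (1 : ℝ)

/-- The group `Ŝ¹` of rotations and reflections of the time circle: the element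
`⟨θ, false⟩` is the rotation `t ↦ θ + t` and `⟨θ, true⟩` is the reflection `t ↦ θ - t`. -/
@[ext] structure TimeSym : Type where
  shift : TimeCircle
  rev : Bool

namespace TimeSym

/-- The action of an element of `Ŝ¹` on the time circle. -/
def act (g : TimeSym) (t : TimeCircle) : TimeCircle :=
  g.shift + (if g.rev then -t else t)

instance : One TimeSym := ⟨⟨0, false⟩⟩
instance : Mul TimeSym :=
  ⟨fun g h => ⟨g.shift + (if g.rev then -h.shift else h.shift), xor g.rev h.rev⟩⟩
instance : Inv TimeSym := ⟨fun g => ⟨if g.rev then g.shift else -g.shift, g.rev⟩⟩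

@[simp] lemma one_shift : (1 : TimeSym).shift = 0 := rfl
@[simp] lemma one_rev : (1 : TimeSym).rev = false := rfl
@[simp] lemma mul_shift (g h : TimeSym) :
    (g * h).shift = g.shift + (if g.rev then -h.shift else h.shift) := rfl
@[simp] lemma mul_rev (g h : TimeSym) : (g * h).rev = xor g.rev h.rev := rfl
@[simp] lemma inv_shift (g : TimeSym) :
    g⁻¹.shift = if g.rev then g.shift else -g.shift := rfl
@[simp] lemma inv_rev (g : TimeSym) : g⁻¹.rev = g.rev := rfl

instance : Group TimeSym where
  mul_assoc a b c := by
    obtain ⟨sa, ra⟩ := a; obtain ⟨sb, rb⟩ := b; obtain ⟨sc, rc⟩ := c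
    ext
    · simp only [mul_shift, mul_rev]
      cases ra <;> cases rb <;> simp <;> abel
    · simp [Bool.xor_assoc]
  one_mul a := by ext <;> simp
  mul_one a := by obtain ⟨sa, ra⟩ := a; ext <;> cases ra <;> simp
  inv_mul_cancel a := by obtain ⟨sa, ra⟩ := a; ext <;> cases ra <;> simp

@[simp] lemma act_one (t : TimeCircle) : (1 : TimeSym).act t = t := by simp [act]

@[simp] lemma act_mul (g h : TimeSym) (t : TimeCircle) :
    (g * h).act t = g.act (h.act t) := by
  obtain ⟨sg, rg⟩ := g; obtain ⟨sh, rh⟩ := h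
  simp only [act, mul_shift, mul_rev]
  cases rg <;> cases rh <;> simp <;> abel

/-- The rotation `t ↦ θ + t` of the time circle, as an element of `Ŝ¹`. -/
def trot (θ : ℝ) : TimeSym := ⟨(θ : TimeCircle), false⟩

/-- The reflection `t ↦ θ - t` of the time circle, as an element of `Ŝ¹`. -/
def tref (θ : ℝ) : TimeSym := ⟨(θ : TimeCircle), true⟩

end TimeSym

/-- The orthogonal group `O(2)`, realised as the group of `ℝ`-linear isometries of `ℂ`. -/
abbrev O2 : Type := ℂ ≃ₗᵢ[ℝ] ℂ

/-- `A ∈ SO(2)`: `A` is a rotation, i.e. acts as multiplication by a unit complex number. -/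
def IsRotO (A : O2) : Prop := ∀ z : ℂ, A z = A 1 * z

/-- Rotation of the plane through the angle `2πa`, as an element of `O(2)`. -/
def rotO (a : ℝ) : O2 := rotation (Circle.exp (2 * Real.pi * a))

/-- The full symmetry group `Γ × Ŝ¹ = O(2) × Sₙ × Ŝ¹` acting on loops in configuration space. -/
abbrev FullG (n : ℕ) : Type := (O2 × Equiv.Perm (Fin n)) × TimeSym

/-- The element `g = (A, σ, τ)` of `Γ × Ŝ¹` fixes the loop `u` in configuration space. -/
def Fixes {n : ℕ} (g : FullG n) (u : TimeCircle → Fin n → ℂ) : Prop :=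
  ∀ (t : TimeCircle) (j : Fin n), u (g.2.act t) j = g.1.1 (u t (g.1.2⁻¹ j))

/-- The symmetry group of a loop `u`: its stabilizer in `Γ × Ŝ¹`. -/
def symmGroup (n : ℕ) (u : TimeCircle → Fin n → ℂ) : Subgroup (FullG n) where
  carrier := {g | Fixes g u}
  one_mem' := by
    intro t j
    simp [Fixes]
  mul_mem' := by
    intro a b ha hb t j
    have h1 := ha (b.2.act t) j
    have h2 := hb t (a.1.2⁻¹ j)
    simp only [Fixes] at *
    simp only [Prod.fst_mul, Prod.snd_mul, TimeSym.act_mul]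
    rw [h1, h2]
    simp [mul_inv_rev]
  inv_mem' := by
    intro a ha
    have key : ∀ (t : TimeCircle) (j : Fin n),
        a.1.1⁻¹ (u t (a.1.2 j)) = u (a.2⁻¹.act t) j := by
      intro t j
      have h := ha (a.2⁻¹.act t) (a.1.2 j)
      rw [← TimeSym.act_mul, mul_inv_cancel, TimeSym.act_one] at h
      rw [show a.1.2⁻¹ (a.1.2 j) = j from a.1.2.symm_apply_apply j] at h
      rw [h, LinearIsometryEquiv.coe_inv, LinearIsometryEquiv.symm_apply_apply]
    intro t j
    show u ((a⁻¹).2.act t) j = (a⁻¹).1.1 (u t ((a⁻¹).1.2⁻¹ j))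
    simp only [Prod.fst_inv, Prod.snd_inv, inv_inv]
    exact (key t j).symm

variable {n : ℕ}

/-- The basic cyclic permutation `σ₁ : j ↦ j + 1`. -/
def sigma1 (n : ℕ) [NeZero n] : Equiv.Perm (Fin n) := Equiv.addLeft 1

/-- The permutation `s₁ : j ↦ -j` (in `1`-indexed notation, `j ↦ 2 - j`). -/
def sOne (n : ℕ) [NeZero n] : Equiv.Perm (Fin n) := Equiv.neg (Fin n)

/-- The choreography element `𝔠 = (I, σ₁, -1/n)`. -/
def chorEl (n : ℕ) [NeZero n] : FullG n := ((1, sigma1 n), TimeSym.trot (-(1 / n)))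

/-- Projection `ρ : Γ × Ŝ¹ → O(2)`. -/
def rhoHom (n : ℕ) : FullG n →* O2 :=
  (MonoidHom.fst _ _).comp (MonoidHom.fst _ _)

/-- Projection `σ : Γ × Ŝ¹ → Sₙ`. -/
def sigHom (n : ℕ) : FullG n →* Equiv.Perm (Fin n) :=
  (MonoidHom.snd _ _).comp (MonoidHom.fst _ _)

/-- Projection `τ : Γ × Ŝ¹ → Ŝ¹`. -/
def tauHom (n : ℕ) : FullG n →* TimeSym := MonoidHom.snd _ _


/-- For a collision-free choreography `u` with symmetry group
`G = symmGroup n u`, the intersections `ker τ ∩ ker ρ` and `ker τ ∩ ker σ` are trivial: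
if `(I, σ, 0) ∈ G` then `σ = e`, and if `(A, e, 0) ∈ G` then `A = I`. -/
theorem statement_0 (n : ℕ) (hn : 3 ≤ n) [NeZero n]
    (u : TimeCircle → Fin n → ℂ) (hu : Continuous u)
    (hsum : ∀ t, ∑ j, u t j = 0)
    (hcoll : ∀ t, Function.Injective (u t))
    (hchor : chorEl n ∈ symmGroup n u) :
    (∀ σ : Equiv.Perm (Fin n), (((1, σ), 1) : FullG n) ∈ symmGroup n u → σ = 1) ∧
    (∀ A : O2, (((A, 1), 1) : FullG n) ∈ symmGroup n u → A = 1) := by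
  
  have hne01 : (0 : Fin n) ≠ 1 := by
    intro h
    have := congrArg Fin.val h
    rw [Fin.val_one'] at this
    simp at this
    omega
  constructor
  · intro σ hg
    have hg' : Fixes (((1 : O2), σ), (1 : TimeSym)) u := hg
    have key : ∀ j, u 0 j = u 0 (σ⁻¹ j) := by
      intro j
      have h := hg' 0 j
      simpa using h
    have hinv : σ⁻¹ = 1 := by
      ext j
      have := hcoll 0 (key j)
      simp [← this]
    simpa using congrArg (·⁻¹) hinv
  · intro A hg
    have hg' : Fixes ((A, (1 : Equiv.Perm (Fin n))), (1 : TimeSym)) u := hg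
    have hfix : ∀ t j, A (u t j) = u t j := by
      intro t j
      have h := hg' t j
      simp only [TimeSym.act_one, inv_one, Equiv.Perm.one_apply] at h
      exact h.symm
    by_contra hA
    -- the fixed subspace of A
    set S : Submodule ℝ ℂ :=
      LinearMap.ker (A.toLinearEquiv.toLinearMap - LinearMap.id) with hS
    have hmemS : ∀ z : ℂ, z ∈ S ↔ A z = z := by
      intro z
      simp [hS, LinearMap.mem_ker, LinearMap.sub_apply, sub_eq_zero]
    have hmem : ∀ t j, u t j ∈ S := fun t j => (hmemS _).mpr (hfix t j)
    have hSne : S ≠ ⊤ := by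
      intro htop
      apply hA
      apply LinearIsometryEquiv.ext
      intro z
      have hz : z ∈ S := htop ▸ Submodule.mem_top
      simpa using (hmemS z).mp hz
    have hfr : Module.finrank ℝ S ≤ 1 := by
      have h2 : Module.finrank ℝ ℂ = 2 := Complex.finrank_real_complex
      have := Submodule.finrank_lt (K := ℝ) (V := ℂ) hSne
      omega
    obtain ⟨v, hv⟩ := ((Submodule.finrank_le_one_iff_isPrincipal S).mp hfr).principal
    have hmemv : ∀ t j, u t j ∈ Submodule.span ℝ {v} := fun t j => hv ▸ hmem t j
    have hv0 : v ≠ 0 := by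
      intro h0
      rw [h0, Submodule.span_zero_singleton] at hmemv
      have h1 := hmemv 0 0
      have h2 := hmemv 0 1
      simp only [Submodule.mem_bot] at h1 h2
      exact hne01 (hcoll 0 (h1.trans h2.symm))
    -- the choreography step : u t 1 = u (t + 1/n) 0
    have hch : Fixes (chorEl n) u := hchor
    have hstep : ∀ t : TimeCircle, u t 1 = u (t + ((1 / n : ℝ) : TimeCircle)) 0 := by
      intro t
      have h := hch (t + ((1 / n : ℝ) : TimeCircle)) 1
      have hact : (TimeSym.trot (-(1 / n))).act (t + ((1 / n : ℝ) : TimeCircle)) = t := by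
        simp only [TimeSym.act, TimeSym.trot]
        rw [AddCircle.coe_neg]
        exact neg_add_cancel_comm_assoc _ _
      have hperm : (sigma1 n)⁻¹ 1 = 0 := by
        simp [sigma1]
      have h11 : (chorEl n).2 = TimeSym.trot (-(1 / n)) := rfl
      rw [h11, hact] at h
      have h12 : (chorEl n).1.2⁻¹ (1 : Fin n) = 0 := hperm
      rw [h12] at h
      simpa [chorEl] using h
    -- coordinate function
    set x : TimeCircle → ℝ := fun t => (u t 0 * (starRingEnd ℂ) v).re with hx
    have hcx : Continuous x := by
      apply Complex.continuous_re.comp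
      exact ((continuous_apply (0 : Fin n)).comp hu).mul continuous_const
    set h : TimeCircle → ℝ := fun t => x (t + ((1 / n : ℝ) : TimeCircle)) - x t with hh
    have hch' : Continuous h := (hcx.comp (continuous_add_right _)).sub hcx
    have hval : ∀ t, ∃ c : ℝ, c ≠ 0 ∧ h t = c * Complex.normSq v := by
      intro t
      have hd : u t 1 - u t 0 ∈ Submodule.span ℝ {v} :=
        Submodule.sub_mem _ (hmemv t 1) (hmemv t 0)
      obtain ⟨c, hc⟩ := Submodule.mem_span_singleton.mp hd
      refine ⟨c, ?_, ?_⟩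
      · intro h0
        rw [h0, zero_smul] at hc
        have heq : u t 1 = u t 0 := by
          have := hc.symm
          rwa [sub_eq_zero] at this
        exact hne01 ((hcoll t heq).symm)
      · have heq : h t = ((u t 1 - u t 0) * (starRingEnd ℂ) v).re := by
          simp only [hh, hx, ← hstep t, sub_mul, Complex.sub_re]
        rw [heq, ← hc, Complex.real_smul, mul_assoc, Complex.mul_conj, ← Complex.ofReal_mul,
          Complex.ofReal_re]
    have hne : ∀ t, h t ≠ 0 := by
      intro t h0
      obtain ⟨c, hc0, hceq⟩ := hval t
      rw [h0] at hceq
      have hpos := Complex.normSq_pos.mpr hv0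
      rcases mul_eq_zero.mp hceq.symm with h | h
      · exact hc0 h
      · exact hpos.ne' h
    have hsign : (∀ t, 0 < h t) ∨ (∀ t, h t < 0) := by
      by_contra hcon
      push_neg at hcon
      obtain ⟨⟨a, ha⟩, ⟨b, hb⟩⟩ := hcon
      have h0 : (0 : ℝ) ∈ Set.Icc (h a) (h b) := ⟨ha, hb⟩
      obtain ⟨t, ht⟩ := intermediate_value_univ a b hch' h0
      exact hne t ht
    -- telescoping sum
    have hnR : (n : ℝ) ≠ 0 := Nat.cast_ne_zero.mpr (NeZero.ne n)
    have htel : ∑ k ∈ Finset.range n, h (((k / n : ℝ) : TimeCircle)) = 0 := by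
      have hcong : ∀ k ∈ Finset.range n, h (((k / n : ℝ) : TimeCircle)) =
          (fun k : ℕ => x ((((k : ℝ) / n : ℝ) : TimeCircle))) (k + 1) -
          (fun k : ℕ => x ((((k : ℝ) / n : ℝ) : TimeCircle))) k := by
        intro k _
        simp only [hh]
        congr 2
        rw [← AddCircle.coe_add]
        push_cast
        ring_nf
      have key : ∑ k ∈ Finset.range n, h (((k / n : ℝ) : TimeCircle)) =
          (fun k : ℕ => x ((((k : ℝ) / n : ℝ) : TimeCircle))) n -
          (fun k : ℕ => x ((((k : ℝ) / n : ℝ) : TimeCircle))) 0 := by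
        rw [← Finset.sum_range_sub (fun k : ℕ => x ((((k : ℝ) / n : ℝ) : TimeCircle))) n]
        exact Finset.sum_congr rfl hcong
      have h1 : ((n : ℝ) / n : ℝ) = 1 := div_self hnR
      have h2 : (((1 : ℝ)) : TimeCircle) = 0 := AddCircle.coe_period 1
      rw [key]
      simp [h1, h2]
    have hnpos : (Finset.range n).Nonempty := Finset.nonempty_range_iff.mpr (by omega)
    rcases hsign with hp | hp
    · have hgt : 0 < ∑ k ∈ Finset.range n, h (((k / n : ℝ) : TimeCircle)) :=
        Finset.sum_pos (fun i _ => hp _) hnpos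
      exact hgt.ne' htel
    · have hlt : ∑ k ∈ Finset.range n, h (((k / n : ℝ) : TimeCircle)) < 0 :=
        Finset.sum_neg (fun i _ => hp _) hnpos
      exact htel.not_lt hlt


end
end

section
/- Let n ≥ 3 and let u = (z₁,…,zₙ) be a choreography in X⁽ⁿ⁾ with each zⱼ : ℝ → ℂ continuously differentiable and 1-periodic, and suppose the angular momentum J(t) = Σⱼ Im( conj(zⱼ(t)) · zⱼ′(t) ) is constant in t. If the symmetry group of u contains an element (A, σ, τ) for which exactly one of the following holds — A ∉ SO(2) (A is a reflection), or τ ∉ S¹ (τ is time-reversing) — then J ≡ 0. In particular, a choreography with constant angular momentum whose symmetry group contains (κ, σ₂, −1/(2n)) (type C'(n,2)) or (R_π, s₁, 0̄) (types D'(n,1), D'(n,2)) has zero angular momentum. -/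
noncomputable section

open Complex

private lemma circle_conj_mul (a : Circle) : (starRingEnd ℂ) ↑a * ↑a = 1 := by
  rw [mul_comm, Complex.mul_conj, Circle.normSq_coe, Complex.ofReal_one]

private lemma im_rot (c z w : ℂ) (hc : (starRingEnd ℂ) c * c = 1) :
    ((starRingEnd ℂ) (c * z) * (c * w)).im = ((starRingEnd ℂ) z * w).im := by
  rw [map_mul, show (starRingEnd ℂ) c * (starRingEnd ℂ) z * (c * w)
      = ((starRingEnd ℂ) c * c) * ((starRingEnd ℂ) z * w) by ring, hc, one_mul]

private lemma im_refl (c z w : ℂ) (hc : (starRingEnd ℂ) c * c = 1) :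
    ((starRingEnd ℂ) (c * (starRingEnd ℂ) z) * (c * (starRingEnd ℂ) w)).im
      = -(((starRingEnd ℂ) z * w).im) := by
  rw [map_mul, Complex.conj_conj,
    show (starRingEnd ℂ) c * z * (c * (starRingEnd ℂ) w)
      = ((starRingEnd ℂ) c * c) * (z * (starRingEnd ℂ) w) by ring, hc, one_mul,
    show z * (starRingEnd ℂ) w = (starRingEnd ℂ) ((starRingEnd ℂ) z * w) by
      rw [map_mul, Complex.conj_conj], Complex.conj_im]

/-- A choreography with constant angular momentum whose symmetry group
contains an element `(A, σ, τ)` such that exactly one of "`A` is a reflection" and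
"`τ` is time-reversing" holds, has zero angular momentum. -/
theorem statement_9 (n : ℕ) (hn : 3 ≤ n) [NeZero n]
    (u u' : ℝ → Fin n → ℂ)
    (hder : ∀ (j : Fin n) (t : ℝ), HasDerivAt (fun s => u s j) (u' t j) t)
    (hder' : ∀ j : Fin n, Continuous fun t => u' t j)
    (hper : ∀ t, u (t + 1) = u t)
    (hsum : ∀ t, ∑ j, u t j = 0)
    (hcoll : ∀ t, Function.Injective (u t))
    (hchor : ∀ (t : ℝ) (j : Fin n), u (t + 1 / n) j = u t (j + 1))
    (hJconst : ∀ s t : ℝ,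
      (∑ j, ((starRingEnd ℂ) (u s j) * u' s j).im) =
      (∑ j, ((starRingEnd ℂ) (u t j) * u' t j).im))
    (A : ℂ ≃ₗᵢ[ℝ] ℂ) (σ : Equiv.Perm (Fin n)) (θ : ℝ) (ε : Bool)
    (hsymm : ∀ (t : ℝ) (j : Fin n),
      u (θ + (if ε then -t else t)) j = A (u t (σ⁻¹ j)))
    (hxor : Xor' (¬ ∀ w : ℂ, A w = A 1 * w) (ε = true)) :
    ∀ t : ℝ, (∑ j, ((starRingEnd ℂ) (u t j) * u' t j).im) = 0 := by
  intro t
  obtain ⟨a, hA | hA⟩ := linear_isometry_complex A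
  · -- rotation case: ε must be true
    have hrot : ∀ w : ℂ, A w = A 1 * w := by
      intro w; rw [hA, rotation_apply, rotation_apply, mul_one]
    have hε : ε = true := by
      rcases hxor with ⟨hP, _⟩ | ⟨hQ, _⟩
      · exact absurd hrot hP
      · exact hQ
    subst hε
    -- symmetry with time reversal
    have hsymm' : ∀ (s : ℝ) (j : Fin n), u (θ + -s) j = ↑a * u s (σ⁻¹ j) := by
      intro s j
      have h := hsymm s j
      rw [if_pos rfl, hA, rotation_apply] at h
      exact h
    -- derivative relation
    have hd : ∀ j : Fin n, -(u' (θ + -t) j) = ↑a * u' t (σ⁻¹ j) := by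
      intro j
      have hh : HasDerivAt (fun s : ℝ => θ + -s) (-1 : ℝ) t := by
        simpa using ((hasDerivAt_id t).neg.const_add θ)
      have h1' := HasDerivAt.scomp (x := t) (hder j (θ + -t)) hh
      have h1 : HasDerivAt (fun s : ℝ => u (θ + -s) j)
          ((-1 : ℝ) • u' (θ + -t) j) t := h1'
      have h2 : HasDerivAt (fun s : ℝ => ↑a * u s (σ⁻¹ j))
          (↑a * u' t (σ⁻¹ j)) t := (hder (σ⁻¹ j) t).const_mul _
      have hfun : (fun s : ℝ => u (θ + -s) j) = fun s : ℝ => ↑a * u s (σ⁻¹ j) :=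
        funext fun s => hsymm' s j
      have := (hfun ▸ h1).unique h2
      simpa using this
    have hterm : ∀ j : Fin n,
        ((starRingEnd ℂ) (u (θ + -t) j) * u' (θ + -t) j).im
          = -(((starRingEnd ℂ) (u t (σ⁻¹ j)) * u' t (σ⁻¹ j)).im) := by
      intro j
      have h2 : u' (θ + -t) j = -(↑a * u' t (σ⁻¹ j)) := by
        rw [← hd j, neg_neg]
      rw [hsymm' t j, h2, mul_neg, Complex.neg_im,
        im_rot (↑a) _ _ (circle_conj_mul a)]
    have hsum2 : (∑ j, ((starRingEnd ℂ) (u (θ + -t) j) * u' (θ + -t) j).im)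
        = -(∑ j, ((starRingEnd ℂ) (u t j) * u' t j).im) := by
      rw [← Equiv.sum_comp σ⁻¹ (fun j => ((starRingEnd ℂ) (u t j) * u' t j).im),
        ← Finset.sum_neg_distrib]
      exact Finset.sum_congr rfl fun j _ => hterm j
    have hC := hJconst (θ + -t) t
    linarith [hC, hsum2]
  · -- reflection case: ε must be false
    have hrefl : ∀ w : ℂ, A w = ↑a * (starRingEnd ℂ) w := by
      intro w
      rw [hA, LinearIsometryEquiv.trans_apply, conjLIE_apply, rotation_apply]
    have hε : ε = false := by
      rcases hxor with ⟨_, hQ⟩ | ⟨hQ, hP⟩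
      · simpa using hQ
      · exfalso
        apply hP
        intro hall
        have h1 := hall I
        have h2 := hrefl I
        have h3 := hrefl 1
        rw [h2, h3] at h1
        simp only [map_one, mul_one, Complex.conj_I] at h1
        have hI : (-I : ℂ) = I := mul_left_cancel₀ (Circle.coe_ne_zero a) h1
        have := congrArg Complex.im hI
        norm_num at this
    subst hε
    have hsymm' : ∀ (s : ℝ) (j : Fin n),
        u (θ + s) j = ↑a * (starRingEnd ℂ) (u s (σ⁻¹ j)) := by
      intro s j
      have h := hsymm s j
      rw [if_neg (by simp), hrefl] at h
      exact h
    have hd : ∀ j : Fin n, u' (θ + t) j = ↑a * (starRingEnd ℂ) (u' t (σ⁻¹ j)) := by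
      intro j
      have hh : HasDerivAt (fun s : ℝ => θ + s) (1 : ℝ) t := by
        simpa using ((hasDerivAt_id t).const_add θ)
      have h1' := HasDerivAt.scomp (x := t) (hder j (θ + t)) hh
      have h1 : HasDerivAt (fun s : ℝ => u (θ + s) j)
          ((1 : ℝ) • u' (θ + t) j) t := h1'
      have h2 : HasDerivAt (fun s : ℝ => (starRingEnd ℂ) (u s (σ⁻¹ j)))
          ((starRingEnd ℂ) (u' t (σ⁻¹ j))) t := by
        have := ((Complex.conjCLE : ℂ ≃L[ℝ] ℂ).toContinuousLinearMap.hasFDerivAt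
          (x := u t (σ⁻¹ j))).comp_hasDerivAt t (hder (σ⁻¹ j) t)
        simpa [Function.comp_def] using this
      have h2' : HasDerivAt (fun s : ℝ => ↑a * (starRingEnd ℂ) (u s (σ⁻¹ j)))
          (↑a * (starRingEnd ℂ) (u' t (σ⁻¹ j))) t := h2.const_mul _
      have hfun : (fun s : ℝ => u (θ + s) j)
          = fun s : ℝ => ↑a * (starRingEnd ℂ) (u s (σ⁻¹ j)) :=
        funext fun s => hsymm' s j
      have := (hfun ▸ h1).unique h2'
      simpa using this
    have hterm : ∀ j : Fin n,
        ((starRingEnd ℂ) (u (θ + t) j) * u' (θ + t) j).im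
          = -(((starRingEnd ℂ) (u t (σ⁻¹ j)) * u' t (σ⁻¹ j)).im) := by
      intro j
      rw [hsymm' t j, hd j, im_refl (↑a) _ _ (circle_conj_mul a)]
    have hsum2 : (∑ j, ((starRingEnd ℂ) (u (θ + t) j) * u' (θ + t) j).im)
        = -(∑ j, ((starRingEnd ℂ) (u t j) * u' t j).im) := by
      rw [← Equiv.sum_comp σ⁻¹ (fun j => ((starRingEnd ℂ) (u t j) * u' t j).im),
        ← Finset.sum_neg_distrib]
      exact Finset.sum_congr rfl fun j _ => hterm j
    have hC := hJconst (θ + t) t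
    linarith [hC, hsum2]

end
end

section
/- Let c ≥ 2 and r ∈ ℤ with r ≢ 0 (mod c), and let z : ℝ → ℂ∖{0} be a continuous 1-periodic function satisfying z(t + 1/c) = e^{2πir/c} · z(t) for all t. Then for every continuous function θ : ℝ → ℝ with z(t) = |z(t)| · e^{2πiθ(t)} for all t, the winding number θ(1) − θ(0) of z about the origin is an integer congruent to r modulo c; in particular it is non-zero. (The underlying curve of any choreography with non-trivial core satisfies such a relation, hence has non-zero winding number about the origin.) -/
noncomputable section

open Complex

lemma const_of_int_valued (g : ℝ → ℝ) (hg : Continuous g)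
    (hint : ∀ t, ∃ n : ℤ, g t = n) (t : ℝ) : g t = g 0 := by
  by_contra h
  obtain ⟨n, hn⟩ := hint 0
  obtain ⟨m, hm⟩ := hint t
  have hnm : m ≠ n := by rintro rfl; exact h (hm.trans hn.symm)
  have hgap : (1 : ℝ) ≤ |(m : ℝ) - (n : ℝ)| := by
    have : 1 ≤ |m - n| := Int.one_le_abs (sub_ne_zero.mpr hnm)
    exact_mod_cast (by exact_mod_cast this : (1:ℝ) ≤ ((|m - n| : ℤ) : ℝ))
  have key : min (g 0) (g t) + 1/2 ∈ Set.uIcc (g 0) (g t) := by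
    rw [Set.uIcc, Set.mem_Icc, hn, hm]
    have h1 := max_sub_min_eq_abs ((n:ℝ)) ((m:ℝ))
    have h2 : |(n:ℝ) - (m:ℝ)| = |(m:ℝ) - (n:ℝ)| := abs_sub_comm _ _
    constructor <;> [linarith; nlinarith [h1, h2, hgap]]
  obtain ⟨s, -, hs⟩ := intermediate_value_uIcc hg.continuousOn key
  obtain ⟨k, hk⟩ := hint s
  rw [hk, hn, hm] at hs
  have hmin : min ((n:ℝ)) ((m:ℝ)) = ((min n m : ℤ) : ℝ) := (Int.cast_min).symm
  rw [hmin] at hs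
  have : ((2 * (k - min n m) : ℤ) : ℝ) = 1 := by push_cast; linarith
  have : 2 * (k - min n m) = 1 := by exact_mod_cast this
  omega

/-- If a continuous `1`-periodic non-vanishing curve `z` satisfies
`z(t + 1/c) = e^{2πir/c} z(t)` with `r ≢ 0 (mod c)`, then its winding number about the
origin is an integer congruent to `r` modulo `c`; in particular it is non-zero. -/
theorem statement_13 (c : ℕ) (hc : 2 ≤ c) (r : ℤ) (hr : ¬ ((c : ℤ) ∣ r))
    (z : ℝ → ℂ) (hz : Continuous z) (h0 : ∀ t, z t ≠ 0)
    (hper : ∀ t, z (t + 1) = z t)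
    (hsym : ∀ t, z (t + 1 / c) =
      Complex.exp (2 * (Real.pi : ℂ) * Complex.I * (r : ℂ) / (c : ℂ)) * z t)
    (θ : ℝ → ℝ) (hθ : Continuous θ)
    (hlift : ∀ t, z t = (‖z t‖ : ℂ) *
      Complex.exp (2 * (Real.pi : ℂ) * Complex.I * ((θ t : ℝ) : ℂ))) :
    ∃ m : ℤ, θ 1 - θ 0 = (m : ℝ) ∧ m ≡ r [ZMOD (c : ℤ)] ∧ m ≠ 0 := by
  have hcR : (c : ℝ) ≠ 0 := Nat.cast_ne_zero.mpr (by omega)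
  have hcC : (c : ℂ) ≠ 0 := Nat.cast_ne_zero.mpr (by omega)
  have hπ : (2 * (Real.pi : ℂ) * Complex.I) ≠ 0 := by
    simp [Real.pi_ne_zero, Complex.I_ne_zero]
  set g : ℝ → ℝ := fun t => θ (t + 1 / c) - θ t - (r : ℝ) / c with hg
  have hgint : ∀ t, ∃ n : ℤ, g t = n := by
    intro t
    have e1 := hlift (t + 1 / c)
    have e2 := hlift t
    have e3 := hsym t
    rw [e1, e2] at e3
    have habs : ‖z (t + 1 / c)‖ = ‖z t‖ := by
      have := congrArg (‖·‖) (hsym t)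
      rw [norm_mul, show 2 * (Real.pi : ℂ) * Complex.I * (r : ℂ) / (c : ℂ)
          = ((2 * Real.pi * (r : ℝ) / (c : ℝ) : ℝ) : ℂ) * Complex.I by push_cast; ring,
        Complex.norm_exp_ofReal_mul_I, one_mul] at this
      exact this
    rw [habs] at e3
    have hB : ((‖z t‖ : ℝ) : ℂ) ≠ 0 := by
      simpa using (norm_ne_zero_iff.mpr (h0 t))
    have e4 : Complex.exp (2 * (Real.pi : ℂ) * Complex.I * ((θ (t + 1/c) : ℝ) : ℂ))
        = Complex.exp (2 * (Real.pi : ℂ) * Complex.I * (r : ℂ) / (c : ℂ)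
            + 2 * (Real.pi : ℂ) * Complex.I * ((θ t : ℝ) : ℂ)) := by
      rw [Complex.exp_add, mul_left_comm] at *
      exact mul_left_cancel₀ hB e3
    rw [Complex.exp_eq_exp_iff_exists_int] at e4
    obtain ⟨n, hn⟩ := e4
    refine ⟨n, ?_⟩
    have key : (2 * (Real.pi : ℂ) * Complex.I) * ((θ (t + 1/c) : ℂ))
        = (2 * (Real.pi : ℂ) * Complex.I) * (((θ t : ℝ) : ℂ) + (r : ℂ) / (c : ℂ) + (n : ℂ)) := by
      rw [mul_add, mul_add]
      rw [hn]; field_simp; ring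
    have key2 := mul_left_cancel₀ hπ key
    have key3 : (θ (t + 1/c) : ℝ) = θ t + (r : ℝ) / c + n := by
      exact_mod_cast key2
    simp only [hg]
    linarith
  have hgcont : Continuous g := by
    apply Continuous.sub
    apply Continuous.sub
    · exact hθ.comp (continuous_id.add continuous_const)
    · exact hθ
    · exact continuous_const
  obtain ⟨n0, hn0⟩ := hgint 0
  have hgconst : ∀ t, g t = (n0 : ℝ) := fun t => (const_of_int_valued g hgcont hgint t).trans hn0
  -- telescoping sum
  have htel : θ 1 - θ 0 = ∑ i ∈ Finset.range c, (θ (((i : ℝ) + 1) / c) - θ ((i : ℝ) / c)) := by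
    have := Finset.sum_range_sub (fun i : ℕ => θ ((i : ℝ) / c)) c
    simp only [Nat.cast_add, Nat.cast_one] at this
    rw [this, Nat.cast_zero, zero_div, div_self hcR]
  have hterm : ∀ i : ℕ, θ (((i : ℝ) + 1) / c) - θ ((i : ℝ) / c) = (n0 : ℝ) + (r : ℝ) / c := by
    intro i
    have h1 := hgconst ((i : ℝ) / c)
    simp only [hg] at h1
    rw [show ((i : ℝ) + 1) / c = (i : ℝ) / c + 1 / c by ring]
    linarith
  rw [htel] at *
  have hsum : (∑ i ∈ Finset.range c, (θ (((i : ℝ) + 1) / c) - θ ((i : ℝ) / c)))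
      = (c : ℝ) * ((n0 : ℝ) + (r : ℝ) / c) := by
    rw [Finset.sum_congr rfl fun i _ => hterm i, Finset.sum_const, Finset.card_range,
      nsmul_eq_mul]
  refine ⟨(c : ℤ) * n0 + r, ?_, ?_, ?_⟩
  · rw [hsum]; push_cast; field_simp
  · exact (Int.modEq_iff_dvd.mpr ⟨-n0, by ring⟩)
  · intro hm
    apply hr
    exact ⟨-n0, by linarith [hm]⟩

end
end

section
/- Let Γ be a group acting continuously (by homeomorphisms) on a topological space X, let G ≤ Γ be a subgroup, and let τ : G → S¹ = ℝ/ℤ be a homomorphism whose image is the cyclic group of order r generated by 1/r; set K = ker τ and X^K = Fix(K, X). Fix g ∈ G with τ(g) = 1/r. Give the free loop space ΛX = C(ℝ/ℤ, X) and the relative loop space Λ^g X^K = {γ ∈ C([0,1], X^K) : γ(1) = g·γ(0)} the compact-open topologies, and set Fix(G_τ, ΛX) = {u ∈ ΛX : h·u(t) = u(t + τ(h)) for all h ∈ G and all t}. Then every u ∈ Fix(G_τ, ΛX) takes values in X^K, and the map u ↦ (t ↦ u(t/r)) is a homeomorphism from Fix(G_τ, ΛX) onto Λ^g X^K. -/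
open Set

noncomputable section Aux
variable {X : Type*} [TopologicalSpace X] {Γ : Type*} [Group Γ] [MulAction Γ X] (g : Γ)

private def Eg (p : C(unitInterval, X) × ℝ) : X :=
  g ^ ⌊p.2⌋ • p.1 (Set.projIcc (0:ℝ) 1 zero_le_one (Int.fract p.2))

private def Egn (n : ℤ) (p : C(unitInterval, X) × ℝ) : X :=
  g ^ n • p.1 (Set.projIcc (0:ℝ) 1 zero_le_one (p.2 - n))

private lemma Egn_cont (hcont : ∀ γ : Γ, Continuous fun x : X => γ • x) (n : ℤ) :
    Continuous (Egn g n : C(unitInterval, X) × ℝ → X) := by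
  apply (hcont (g ^ n)).comp
  exact ContinuousEval.continuous_eval.comp
    (continuous_fst.prodMk ((continuous_projIcc (h := zero_le_one)).comp
      (continuous_snd.sub continuous_const)))

private lemma Eg_eq_Egn {n : ℤ} {p : C(unitInterval, X) × ℝ} (hp : p.2 ∈ Set.Ico (n:ℝ) (n+1)) :
    Eg g p = Egn g n p := by
  have hfl : ⌊p.2⌋ = n := Int.floor_eq_iff.mpr ⟨hp.1, hp.2⟩
  have hfr : Int.fract p.2 = p.2 - n := by rw [Int.fract, hfl]
  rw [Eg, Egn, hfl, hfr]

private lemma Eg_match {γ : C(unitInterval, X)} (hγ : γ 1 = g • γ 0) (n : ℤ) :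
    Eg g (γ, (n:ℝ)) = Egn g (n-1) (γ, (n:ℝ)) := by
  have h1 : ((n:ℝ) - ((n-1 : ℤ) : ℝ)) = 1 := by push_cast; ring
  rw [Eg, Egn]
  simp only [Int.floor_intCast, Int.fract_intCast, h1]
  rw [Set.projIcc_left, Set.projIcc_right]
  have h0 : (⟨(0:ℝ), left_mem_Icc.2 zero_le_one⟩ : unitInterval) = 0 := rfl
  have h1' : (⟨(1:ℝ), right_mem_Icc.2 zero_le_one⟩ : unitInterval) = 1 := rfl
  rw [h0, h1', hγ, smul_smul, ← zpow_add_one]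
  norm_num

private lemma Eg_add_int (γ : C(unitInterval, X)) (t : ℝ) (m : ℤ) :
    Eg g (γ, t + m) = g ^ m • Eg g (γ, t) := by
  rw [Eg, Eg]
  simp only [Int.floor_add_intCast, Int.fract_add_intCast, smul_smul, ← zpow_add]
  ring_nf

private lemma Eg_contOn (hcont : ∀ γ : Γ, Continuous fun x : X => γ • x) :
    ContinuousOn (Eg g) ({γ : C(unitInterval, X) | γ 1 = g • γ 0} ×ˢ (univ : Set ℝ)) := by
  rintro ⟨γ₀, t₀⟩ ⟨hγ₀, -⟩
  rcases eq_or_lt_of_le (Int.floor_le t₀) with heq | hlt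
  · -- boundary case : t₀ is an integer
    obtain ⟨n, hn⟩ : ∃ n : ℤ, (n:ℝ) = t₀ := ⟨⌊t₀⌋, heq⟩
    subst hn
    apply ContinuousWithinAt.mono (t := ({γ : C(unitInterval, X) | γ 1 = g • γ 0} ×ˢ Iic (n:ℝ)) ∪
      ({γ : C(unitInterval, X) | γ 1 = g • γ 0} ×ˢ Ici (n:ℝ)))
    swap
    · rw [← Set.prod_union, Set.Iic_union_Ici]
    apply ContinuousWithinAt.union
    · -- left side: agrees with Egn (n-1)
      have hmem : ({γ : C(unitInterval, X) | γ 1 = g • γ 0} ×ˢ Iic (n:ℝ)) ∩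
          ((univ : Set C(unitInterval, X)) ×ˢ Ioi ((n:ℝ) - 1)) ∈
          nhdsWithin (γ₀, (n:ℝ)) ({γ : C(unitInterval, X) | γ 1 = g • γ 0} ×ˢ Iic (n:ℝ)) :=
        inter_mem_nhdsWithin _
          ((isOpen_univ.prod isOpen_Ioi).mem_nhds ⟨trivial, by simp⟩)
      apply ((Egn_cont g hcont (n-1)).continuousWithinAt).congr_of_eventuallyEq
      · apply Filter.eventuallyEq_of_mem hmem
        rintro ⟨γq, tq⟩ ⟨⟨hγq, ht2⟩, ⟨-, ht1⟩⟩
        simp only [mem_Ioi, mem_Iic, mem_setOf_eq] at ht1 ht2 hγq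
        rcases eq_or_lt_of_le ht2 with heq2 | hlt2
        · rw [heq2]; exact Eg_match g hγq n
        · apply Eg_eq_Egn
          constructor
          · push_cast; linarith
          · push_cast; linarith
      · exact Eg_match g hγ₀ n
    · -- right side: agrees with Egn n
      have hmem : ({γ : C(unitInterval, X) | γ 1 = g • γ 0} ×ˢ Ici (n:ℝ)) ∩
          ((univ : Set C(unitInterval, X)) ×ˢ Iio ((n:ℝ) + 1)) ∈
          nhdsWithin (γ₀, (n:ℝ)) ({γ : C(unitInterval, X) | γ 1 = g • γ 0} ×ˢ Ici (n:ℝ)) :=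
        inter_mem_nhdsWithin _
          ((isOpen_univ.prod isOpen_Iio).mem_nhds ⟨trivial, by simp⟩)
      apply ((Egn_cont g hcont n).continuousWithinAt).congr_of_eventuallyEq
      · apply Filter.eventuallyEq_of_mem hmem
        rintro ⟨γq, tq⟩ ⟨⟨-, ht2⟩, ⟨-, ht1⟩⟩
        simp only [mem_Iio, mem_Ici] at ht1 ht2
        exact Eg_eq_Egn g ⟨ht2, ht1⟩
      · exact Eg_eq_Egn g ⟨le_refl _, by linarith⟩
  · -- interior case
    apply ContinuousAt.continuousWithinAt
    apply ((Egn_cont g hcont ⌊t₀⌋).continuousAt).congr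
    apply Filter.eventuallyEq_of_mem
      (((isOpen_univ.prod isOpen_Ioo).mem_nhds (by
        exact ⟨trivial, hlt, Int.lt_floor_add_one t₀⟩ )))
    rintro ⟨γq, tq⟩ ⟨-, ht⟩
    exact (Eg_eq_Egn g ⟨le_of_lt ht.1, ht.2⟩).symm

private lemma Eg_Icc {γ : C(unitInterval, X)} (hγ : γ 1 = g • γ 0) (s : unitInterval) :
    Eg g (γ, (s:ℝ)) = γ s := by
  rcases eq_or_lt_of_le s.2.2 with heq | hlt
  · have hs1 : s = 1 := Subtype.ext heq
    subst hs1
    have hco : ((1 : unitInterval) : ℝ) = 1 := rfl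
    rw [hco, Eg]
    simp only [Int.floor_one, Int.fract_one, zpow_one]
    rw [Set.projIcc_left]
    have h0 : (⟨(0:ℝ), left_mem_Icc.2 zero_le_one⟩ : unitInterval) = 0 := rfl
    rw [h0, ← hγ]
  · have : Eg g (γ, (s:ℝ)) = Egn g 0 (γ, (s:ℝ)) := by
      apply Eg_eq_Egn
      constructor
      · exact_mod_cast s.2.1
      · push_cast; linarith
    rw [this, Egn]
    simp only [zpow_zero, one_smul, Int.cast_zero, sub_zero]
    rw [Set.projIcc_of_mem _ s.2]


private lemma Eg_def (p : C(unitInterval, X) × ℝ) :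
    Eg g p = g ^ ⌊p.2⌋ • p.1 (Set.projIcc (0:ℝ) 1 zero_le_one (Int.fract p.2)) := rfl

end Aux

noncomputable section

/-- Let `Γ` act continuously on `X`, let `G ≤ Γ` and let `τ : G → S¹` be a
homomorphism whose image is the cyclic group of order `r` generated by `1/r`, with kernel `K`.
Then every loop `u` with symmetry `G_τ` takes values in `X^K`, and `u ↦ (t ↦ u(t/r))` is a
homeomorphism from `Fix(G_τ, ΛX)` onto the space `Λ^g X^K` of relative loops in `X^K` with
phase `g`, for any `g ∈ G` with `τ(g) = 1/r`. -/
theorem statement_15 {X : Type*} [TopologicalSpace X]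
    {Γ : Type*} [Group Γ] [MulAction Γ X]
    (hcont : ∀ γ : Γ, Continuous fun x : X => γ • x)
    (G : Subgroup Γ) (τ : G →* Multiplicative (AddCircle (1 : ℝ)))
    (r : ℕ) (hr : 1 ≤ r)
    (hrange : τ.range =
      Subgroup.zpowers (Multiplicative.ofAdd ((1 / (r : ℝ) : ℝ) : AddCircle (1 : ℝ))))
    (g : G) (hg : τ g = Multiplicative.ofAdd ((1 / (r : ℝ) : ℝ) : AddCircle (1 : ℝ))) :
    (∀ u : C(AddCircle (1 : ℝ), X),
      (∀ (h : G) (t : AddCircle (1 : ℝ)),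
        (h : Γ) • u t = u (t + Multiplicative.toAdd (τ h))) →
      ∀ (t : AddCircle (1 : ℝ)) (k : G), k ∈ τ.ker → (k : Γ) • u t = u t) ∧
    ∃ Φ : {u : C(AddCircle (1 : ℝ), X) //
            ∀ (h : G) (t : AddCircle (1 : ℝ)),
              (h : Γ) • u t = u (t + Multiplicative.toAdd (τ h))} ≃ₜ
          {γ : C(unitInterval, X) //
            (∀ (s : unitInterval) (k : G), k ∈ τ.ker → (k : Γ) • γ s = γ s) ∧
            γ 1 = (g : Γ) • γ 0},
      ∀ u (t : unitInterval),
        (Φ u : C(unitInterval, X)) t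
          = (u : C(AddCircle (1 : ℝ), X)) ((((t : ℝ) / r : ℝ) : AddCircle (1 : ℝ))) := by
  have hr0 : (r : ℝ) ≠ 0 := Nat.cast_ne_zero.mpr (by omega)
  have part1 : ∀ u : C(AddCircle (1 : ℝ), X),
      (∀ (h : G) (t : AddCircle (1 : ℝ)),
        (h : Γ) • u t = u (t + Multiplicative.toAdd (τ h))) →
      ∀ (t : AddCircle (1 : ℝ)) (k : G), k ∈ τ.ker → (k : Γ) • u t = u t := by
    intro u hu t k hk
    simpa [MonoidHom.mem_ker.mp hk] using hu k t
  refine ⟨part1, ?_⟩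
  have htoAdd : ∀ m : ℤ, Multiplicative.toAdd (τ (g ^ m))
      = (((m : ℝ) / (r : ℝ) : ℝ) : AddCircle (1 : ℝ)) := by
    intro m
    rw [map_zpow, hg, toAdd_zpow, toAdd_ofAdd, ← AddCircle.coe_zsmul]
    congr 1
    rw [zsmul_eq_mul, mul_one_div]
  have hgr : g ^ (r : ℤ) ∈ τ.ker := by
    rw [MonoidHom.mem_ker]
    have h1 : Multiplicative.toAdd (τ (g ^ (r : ℤ))) = 0 := by
      rw [htoAdd]
      push_cast
      rw [div_self hr0]
      exact AddCircle.coe_period 1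
    simpa using congrArg Multiplicative.ofAdd h1
  have hEfix : ∀ γ : C(unitInterval, X),
      (∀ (s : unitInterval) (k : G), k ∈ τ.ker → (k : Γ) • γ s = γ s) →
      ∀ (t : ℝ) (k : G), k ∈ τ.ker → (k : Γ) • Eg (g : Γ) (γ, t) = Eg (g : Γ) (γ, t) := by
    intro γ KF t k hk
    have hk' : g ^ (-⌊t⌋) * k * g ^ (⌊t⌋) ∈ τ.ker := by
      rw [MonoidHom.mem_ker] at hk ⊢
      rw [map_mul, map_mul, map_zpow, map_zpow, hk, mul_one]
      group
    have hcoe : ((g ^ (-⌊t⌋) * k * g ^ (⌊t⌋) : G) : Γ)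
        = (g : Γ) ^ (-⌊t⌋) * (k : Γ) * (g : Γ) ^ (⌊t⌋) := by push_cast; rfl
    rw [Eg_def, smul_smul]
    have hmul : (k : Γ) * (g : Γ) ^ (⌊t⌋)
        = (g : Γ) ^ (⌊t⌋) * ((g ^ (-⌊t⌋) * k * g ^ (⌊t⌋) : G) : Γ) := by
      rw [hcoe]; group
    rw [hmul, mul_smul, KF _ _ hk']
  have hperiodic : ∀ γ : C(unitInterval, X),
      (∀ (s : unitInterval) (k : G), k ∈ τ.ker → (k : Γ) • γ s = γ s) →
      Function.Periodic (fun x : ℝ => Eg (g : Γ) (γ, (r : ℝ) * x)) 1 := by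
    intro γ KF x
    simp only
    have harg : (r : ℝ) * (x + 1) = (r : ℝ) * x + ((r : ℤ) : ℝ) := by push_cast; ring
    rw [harg, Eg_add_int]
    have hcoe : ((g : Γ)) ^ (r : ℤ) = ((g ^ (r : ℤ) : G) : Γ) := by push_cast; rfl
    rw [hcoe]
    exact hEfix γ KF _ _ hgr
  refine ⟨⟨⟨fun u => ⟨(u.1).comp ⟨fun s => (((s : ℝ) / (r : ℝ) : ℝ) : AddCircle (1 : ℝ)),
      (AddCircle.continuous_mk' 1).comp (continuous_subtype_val.div_const _)⟩, ?_⟩,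
    fun γS => ⟨⟨(hperiodic γS.1 γS.2.1).lift, ?_⟩, ?_⟩, ?_, ?_⟩, ?_, ?_⟩, ?_⟩
  case _ u =>
    constructor
    · exact fun s k hk => part1 u.1 u.2 _ k hk
    · have he := u.2 g 0
      rw [hg, toAdd_ofAdd, zero_add] at he
      show u.1 ((((1 : unitInterval) : ℝ) / (r : ℝ) : ℝ) : AddCircle (1 : ℝ))
        = (g : Γ) • u.1 ((((0 : unitInterval) : ℝ) / (r : ℝ) : ℝ) : AddCircle (1 : ℝ))
      have h0 : ((((0 : unitInterval) : ℝ) / (r : ℝ) : ℝ) : AddCircle (1 : ℝ)) = 0 := by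
        norm_num
      rw [h0, he]
      norm_num
  case _ γS =>
    apply QuotientAddGroup.isOpenQuotientMap_mk.continuous_comp_iff.mp
    have hc : Continuous fun x : ℝ => Eg (g : Γ) (γS.1, (r : ℝ) * x) := by
      have := (Eg_contOn (g : Γ) hcont).comp_continuous
        (f := fun x : ℝ => ((γS.1 : C(unitInterval, X)), (r : ℝ) * x))
        (continuous_const.prodMk (continuous_const.mul continuous_id))
        (fun x => ⟨γS.2.2, trivial⟩)
      exact this
    exact hc.congr fun x => ((hperiodic γS.1 γS.2.1).lift_coe x).symm
  case _ γS =>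
    intro h t
    obtain ⟨m, hm⟩ : ∃ m : ℤ,
        (Multiplicative.ofAdd ((1 / (r : ℝ) : ℝ) : AddCircle (1 : ℝ))) ^ m = τ h :=
      Subgroup.mem_zpowers_iff.mp (hrange ▸ ⟨h, rfl⟩)
    obtain ⟨x, rfl⟩ := QuotientAddGroup.mk_surjective t
    have hτh : τ h = τ (g ^ m) := by rw [map_zpow, hg, hm]
    show (h : Γ) • (hperiodic γS.1 γS.2.1).lift ((x : ℝ) : AddCircle (1:ℝ))
      = (hperiodic γS.1 γS.2.1).lift (((x : ℝ) : AddCircle (1:ℝ)) + Multiplicative.toAdd (τ h))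
    rw [hτh, htoAdd m,
      show (((x : ℝ) : AddCircle (1:ℝ)) + (((m : ℝ) / (r:ℝ) : ℝ) : AddCircle (1:ℝ)))
        = ((x + (m : ℝ) / (r:ℝ) : ℝ) : AddCircle (1:ℝ)) from rfl,
      Function.Periodic.lift_coe, Function.Periodic.lift_coe]
    have harg : (r : ℝ) * (x + (m : ℝ) / (r : ℝ)) = (r : ℝ) * x + ((m : ℤ) : ℝ) := by
      field_simp
    rw [harg, Eg_add_int]
    have hker2 : h * g ^ (-m) ∈ τ.ker := by
      rw [MonoidHom.mem_ker, map_mul, map_zpow, hτh, map_zpow]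
      group
    have hre : (h : Γ) = ((h * g ^ (-m) : G) : Γ) * (g : Γ) ^ m := by
      push_cast
      group
    rw [hre, mul_smul, ← Eg_add_int]
    exact hEfix γS.1 γS.2.1 _ _ hker2
  case _ =>
    -- left inverse : Ψ (Φ u) = u
    intro u
    apply Subtype.ext
    apply ContinuousMap.ext
    intro t
    obtain ⟨x, rfl⟩ := QuotientAddGroup.mk_surjective t
    show (hperiodic ((u.1).comp ⟨fun s => (((s : ℝ) / (r : ℝ) : ℝ) : AddCircle (1 : ℝ)),
        (AddCircle.continuous_mk' 1).comp (continuous_subtype_val.div_const _)⟩)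
        (fun s k hk => part1 u.1 u.2 _ k hk)).lift ((x : ℝ) : AddCircle (1:ℝ))
      = u.1 ((x : ℝ) : AddCircle (1:ℝ))
    rw [Function.Periodic.lift_coe]
    have hs : Int.fract ((r : ℝ) * x) ∈ Icc (0 : ℝ) 1 :=
      ⟨Int.fract_nonneg _, (Int.fract_lt_one _).le⟩
    rw [Eg_def]
    simp only
    rw [Set.projIcc_of_mem _ hs]
    show (g : Γ) ^ ⌊(r : ℝ) * x⌋ •
        u.1 (((Int.fract ((r : ℝ) * x) / (r : ℝ) : ℝ)) : AddCircle (1:ℝ))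
      = u.1 ((x : ℝ) : AddCircle (1:ℝ))
    have heq := u.2 (g ^ ⌊(r : ℝ) * x⌋)
      (((Int.fract ((r : ℝ) * x) / (r : ℝ) : ℝ)) : AddCircle (1:ℝ))
    rw [htoAdd, SubgroupClass.coe_zpow] at heq
    rw [heq]
    congr 1
    show ((Int.fract ((r:ℝ) * x) / (r:ℝ) + ((⌊(r:ℝ) * x⌋ : ℝ) / (r:ℝ)) : ℝ) : AddCircle (1:ℝ))
      = ((x : ℝ) : AddCircle (1:ℝ))
    rw [← add_div, Int.fract_add_floor, mul_div_cancel_left₀ _ hr0]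
  case _ =>
    -- right inverse : Φ (Ψ γS) = γS
    intro γS
    apply Subtype.ext
    apply ContinuousMap.ext
    intro s
    show (hperiodic γS.1 γS.2.1).lift ((((s : ℝ) / (r : ℝ) : ℝ)) : AddCircle (1:ℝ)) = γS.1 s
    rw [Function.Periodic.lift_coe]
    have harg : (r : ℝ) * ((s : ℝ) / (r : ℝ)) = (s : ℝ) := by field_simp
    rw [harg]
    exact Eg_Icc (g : Γ) γS.2.2 s
  case _ =>
    exact Continuous.subtype_mk
      ((ContinuousMap.continuous_precomp _).comp continuous_subtype_val) _
  case _ =>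
    apply Continuous.subtype_mk
    apply ContinuousMap.continuous_of_continuous_uncurry
    apply (IsOpenQuotientMap.id.prodMap QuotientAddGroup.isOpenQuotientMap_mk).continuous_comp_iff.mp
    have hc : Continuous fun p : {γ : C(unitInterval, X) //
        (∀ (s : unitInterval) (k : G), k ∈ τ.ker → (k : Γ) • γ s = γ s) ∧
        γ 1 = (g : Γ) • γ 0} × ℝ => Eg (g : Γ) (p.1.1, (r : ℝ) * p.2) := by
      have := (Eg_contOn (g : Γ) hcont).comp_continuous
        (f := fun p : {γ : C(unitInterval, X) //
            (∀ (s : unitInterval) (k : G), k ∈ τ.ker → (k : Γ) • γ s = γ s) ∧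
            γ 1 = (g : Γ) • γ 0} × ℝ => (p.1.1, (r : ℝ) * p.2))
        ((continuous_subtype_val.comp continuous_fst).prodMk
          (continuous_const.mul continuous_snd))
        (fun p => ⟨p.1.2.2, trivial⟩)
      exact this
    exact hc.congr fun p => ((hperiodic p.1.1 p.1.2.1).lift_coe p.2).symm
  case _ =>
    intro u t
    rfl

end
end

section
/- Let z : ℝ → ℂ∖{0} be a continuous 1-periodic function satisfying conj(z(t)) = z(t + 1/2) for all t. Then the winding number of z about the origin is zero: for every continuous function θ : ℝ → ℝ with z(t) = |z(t)| · e^{2πiθ(t)} for all t, one has θ(1) = θ(0). (Hence a choreography of symmetry type C'(n,2) which does not pass through the origin has winding number 0 about the barycentre.) -/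
noncomputable section

open Complex

/-- A continuous real function taking integer values is constant. -/
lemma int_valued_const (g : ℝ → ℝ) (hg : Continuous g) (hint : ∀ t, ∃ n : ℤ, g t = n)
    (a b : ℝ) : g a = g b := by
  choose n hn using hint
  have hcont : Continuous (fun t => (n t : ℤ)) := by
    rw [continuous_iff_continuousAt]
    intro x
    have : (fun t => ((n t : ℤ) : ℝ)) = g := by funext t; exact (hn t).symm
    have h2 : Continuous fun t => ((n t : ℤ) : ℝ) := by rw [this]; exact hg
    exact continuous_iff_continuousAt.mp
      ((Int.isClosedEmbedding_coe_real.toIsEmbedding.continuous_iff).2 h2) x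
  have : IsPreconnected (Set.univ : Set ℝ) := isPreconnected_univ
  have := this.constant (Y := ℤ) hcont.continuousOn (Set.mem_univ a) (Set.mem_univ b)
  rw [hn a, hn b, this]

/-- A continuous `1`-periodic non-vanishing curve `z` with the symmetry
`conj (z t) = z (t + 1/2)` (of a choreography of type `C'(n,2)` avoiding the origin) has
winding number `0` about the origin. -/
theorem statement_18 (z : ℝ → ℂ) (hz : Continuous z) (h0 : ∀ t, z t ≠ 0)
    (hper : ∀ t, z (t + 1) = z t)
    (hsym : ∀ t, (starRingEnd ℂ) (z t) = z (t + 1 / 2))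
    (θ : ℝ → ℝ) (hθ : Continuous θ)
    (hlift : ∀ t, z t = ((‖z t‖ : ℝ) : ℂ) *
      Complex.exp (2 * (Real.pi : ℂ) * Complex.I * ((θ t : ℝ) : ℂ))) :
    θ 1 = θ 0 := by
  have key : ∀ t, ∃ n : ℤ, θ (t + 1 / 2) + θ t = n := by
    intro t
    have habs : ‖z (t + 1 / 2)‖ = ‖z t‖ := by
      rw [← hsym t, Complex.norm_conj]
    have h1 : (starRingEnd ℂ) (z t) =
        ((‖z t‖ : ℝ) : ℂ) * Complex.exp (-(2 * (Real.pi : ℂ) * Complex.I * (θ t : ℂ))) := by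
      have hc : (starRingEnd ℂ) (Complex.exp (2 * (Real.pi : ℂ) * Complex.I * (θ t : ℂ))) =
          Complex.exp (-(2 * (Real.pi : ℂ) * Complex.I * (θ t : ℂ))) := by
        rw [← Complex.exp_conj]
        congr 1
        simp only [map_mul, Complex.conj_ofReal, Complex.conj_I, map_ofNat]
        ring
      rw [hlift t, map_mul, Complex.conj_ofReal, hc, ← hlift t]
    have h2 := hlift (t + 1 / 2)
    rw [habs, ← hsym t, h1] at h2
    have hA : ((‖z t‖ : ℝ) : ℂ) ≠ 0 := by
      simpa using (norm_ne_zero_iff.mpr (h0 t))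
    have h3 : Complex.exp (-(2 * (Real.pi : ℂ) * Complex.I * (θ t : ℂ))) =
        Complex.exp (2 * (Real.pi : ℂ) * Complex.I * ((θ (t + 1 / 2) : ℝ) : ℂ)) :=
      mul_left_cancel₀ hA h2
    have h4 : Complex.exp (2 * (Real.pi : ℂ) * Complex.I * ((θ (t + 1 / 2) : ℝ) : ℂ) +
        2 * (Real.pi : ℂ) * Complex.I * (θ t : ℂ)) = 1 := by
      rw [Complex.exp_add, ← h3, ← Complex.exp_add]
      simp
    rw [Complex.exp_eq_one_iff] at h4
    obtain ⟨n, hn⟩ := h4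
    refine ⟨n, ?_⟩
    have hpi : (Real.pi : ℂ) ≠ 0 := by
      simpa using Real.pi_ne_zero
    have hI : Complex.I ≠ 0 := Complex.I_ne_zero
    have : ((θ (t + 1 / 2) + θ t : ℝ) : ℂ) = (n : ℂ) := by
      push_cast
      have h5 : (2 * (Real.pi : ℂ) * Complex.I) * (((θ (t + 1 / 2) : ℝ) : ℂ) + (θ t : ℂ)) =
          (2 * (Real.pi : ℂ) * Complex.I) * (n : ℂ) := by
        linear_combination hn
      have h6 : (2 * (Real.pi : ℂ) * Complex.I) ≠ 0 := by
        simp [hpi, hI]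
      exact mul_left_cancel₀ h6 h5
    exact_mod_cast this
  have hcont : Continuous (fun t => θ (t + 1 / 2) + θ t) :=
    (hθ.comp (continuous_id.add continuous_const)).add hθ
  have := int_valued_const (fun t => θ (t + 1 / 2) + θ t) hcont key (1 / 2) 0
  have h12 : (1 : ℝ) / 2 + 1 / 2 = 1 := by norm_num
  rw [h12, zero_add] at this
  linarith
end
end
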